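/- arXiv:1110.2216 — 3 statements merged into one kernel-verified Lean document; each statement's English description precedes it below -/
import Mathlib

section
/- During the execution of A*LD with a monotone heuristic h, statements are expanded in non-decreasing order of their figure of merit ℓ(B,R) + h(B); equivalently, the minimum priority of the queue never decreases over the run. -/
open scoped ENNReal

attribute [local instance] Classical.propDecidable

/-- A lightest derivation problem given by a set of prioritized rules: each
rule `A_1,...,A_n →_g C` has a weight function `g` and a priority function
`pr`, both depending on the antecedent weights. -/
structure PLDP where
  Stmt : Type
  Rule : Type
  n : Rule → ℕ
  ant : (r : Rule) → Fin (n r) → Stmt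
  concl : Rule → Stmt
  g : (r : Rule) → (Fin (n r) → ℝ≥0∞) → ℝ≥0∞
  pr : (r : Rule) → (Fin (n r) → ℝ≥0∞) → ℝ≥0∞

namespace PLDP

/-- Derivability of a weight assignment `(B = w)` using the rules. -/
inductive Derives (P : PLDP) : P.Stmt → ℝ≥0∞ → Prop
  | step (r : P.Rule) (w : Fin (P.n r) → ℝ≥0∞)
      (hd : ∀ i, Derives P (P.ant r i) (w i)) :
      Derives P (P.concl r) (P.g r w)

/-- `ℓ(B,R)`, the infimum of the weights derivable for `B`. -/
noncomputable def ell (P : PLDP) (B : P.Stmt) : ℝ≥0∞ := sInf {w | P.Derives B w}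

/-- A state of the generic execution procedure: the set `S` of expanded weight
assignments (a partial map from statements to weights) together with the
priority queue `Q` of pending weight assignments with their priorities. -/
abbrev State (P : PLDP) :=
  (P.Stmt → Option ℝ≥0∞) × Set (P.Stmt × ℝ≥0∞ × ℝ≥0∞)

/-- The initial queue: the assignments defined by rules with no antecedents,
at the priorities given by those rules. -/
def initQ (P : PLDP) : Set (P.Stmt × ℝ≥0∞ × ℝ≥0∞) :=
  {x | ∃ (r : P.Rule) (_ : P.n r = 0) (w : Fin (P.n r) → ℝ≥0∞),
    x = (P.concl r, P.g r w, P.pr r w)}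

/-- The initial state: `S` is empty, `Q` contains the conclusions of rules
with no antecedents. -/
def init (P : PLDP) : P.State := (fun _ => none, P.initQ)

/-- The assignments derivable in a single rule step from `(B = ·)` and the
other assignments recorded in `S`, queued at the priority given by the rule. -/
def newItems (P : PLDP) (S : P.Stmt → Option ℝ≥0∞) (B : P.Stmt) :
    Set (P.Stmt × ℝ≥0∞ × ℝ≥0∞) :=
  {x | ∃ (r : P.Rule) (w : Fin (P.n r) → ℝ≥0∞),
      (∀ i, S (P.ant r i) = some (w i)) ∧ (∃ i, P.ant r i = B) ∧
      x = (P.concl r, P.g r w, P.pr r w)}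

/-- One iteration of the generic procedure: remove a minimum-priority
assignment `(B = w)` from the queue; if `B` already has a weight in `S` it is
ignored, otherwise `(B = w)` is added to `S` and every assignment derivable
from `(B = w)` and the other assignments in `S` by a single rule is inserted
into the queue at the priority specified by the rule. -/
inductive Step (P : PLDP) : P.State → P.State → Prop
  | skip (S : P.Stmt → Option ℝ≥0∞) (Q : Set (P.Stmt × ℝ≥0∞ × ℝ≥0∞))
      (B : P.Stmt) (w q : ℝ≥0∞)
      (hmem : (B, w, q) ∈ Q) (hmin : ∀ x ∈ Q, q ≤ x.2.2)
      (hold : S B ≠ none) :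
      Step P (S, Q) (S, Q \ {(B, w, q)})
  | expand (S : P.Stmt → Option ℝ≥0∞) (Q : Set (P.Stmt × ℝ≥0∞ × ℝ≥0∞))
      (B : P.Stmt) (w q : ℝ≥0∞)
      (hmem : (B, w, q) ∈ Q) (hmin : ∀ x ∈ Q, q ≤ x.2.2)
      (hnew : S B = none) :
      Step P (S, Q) (Function.update S B (some w),
        (Q \ {(B, w, q)}) ∪ P.newItems (Function.update S B (some w)) B)

/-- The states reachable by the generic execution procedure. -/
inductive Reaches (P : PLDP) : P.State → Prop
  | init : Reaches P P.init
  | step (s s' : P.State) (h : Reaches P s) (hs : P.Step s s') : Reaches P s'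

/-- The step at which a statement `B` is expanded (moved from the queue into
`S`). -/
def StepExpands (P : PLDP) (s s' : P.State) (B : P.Stmt) : Prop :=
  P.Step s s' ∧ s.1 B = none ∧ s'.1 B ≠ none

/-- A heuristic `h` is monotone if for every rule and derivable antecedent
weights `w_i`, `w_i + h(A_i) ≤ g(w_1,...,w_n) + h(C)`. -/
def MonotoneHeuristic (P : PLDP) (h : P.Stmt → ℝ≥0∞) : Prop :=
  ∀ (r : P.Rule) (w : Fin (P.n r) → ℝ≥0∞),
    (∀ i, P.Derives (P.ant r i) (w i)) →
    ∀ i, w i + h (P.ant r i) ≤ P.g r w + h (P.concl r)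

end PLDP

section Aux

variable (P : PLDP) (h : P.Stmt → ℝ≥0∞)

/-- Combined execution invariant. -/
def AStarInv (s : P.State) : Prop :=
  (∀ C u, s.1 C = some u → P.Derives C u ∧ ∀ v, P.Derives C v → u ≤ v) ∧
  (∀ x ∈ s.2, P.Derives x.1 x.2.1 ∧ x.2.2 = x.2.1 + h x.1) ∧
  (∀ (r : P.Rule) (w : Fin (P.n r) → ℝ≥0∞),
      (∀ i, s.1 (P.ant r i) = some (w i)) →
      s.1 (P.concl r) ≠ none ∨
        ∃ u ≤ P.g r w, (P.concl r, u, u + h (P.concl r)) ∈ s.2)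

/-- Frontier lemma: any derivable, not-yet-expanded statement has a queue
item at priority at most its derivation merit. -/
theorem astar_frontier (hg : ∀ r : P.Rule, Monotone (P.g r))
    (hmono : P.MonotoneHeuristic h) (s : P.State) (hinv : AStarInv P h s)
    {C : P.Stmt} {v : ℝ≥0∞} (hd : P.Derives C v) :
    s.1 C ≠ none ∨ ∃ x ∈ s.2, x.2.2 ≤ v + h C := by
  induction hd with
  | step r w hd IH =>
    by_cases hall : ∀ i, s.1 (P.ant r i) ≠ none
    · -- all antecedents expanded
      have hu : ∀ i, ∃ u, s.1 (P.ant r i) = some u := by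
        intro i
        cases hx : s.1 (P.ant r i) with
        | none => exact absurd hx (hall i)
        | some u => exact ⟨u, rfl⟩
      choose u hu using hu
      have hule : ∀ i, u i ≤ w i := fun i =>
        (hinv.1 _ _ (hu i)).2 _ (hd i)
      rcases hinv.2.2 r u hu with hS | ⟨u', hle, hmem⟩
      · exact Or.inl hS
      · exact Or.inr ⟨_, hmem, by
          simpa using add_le_add ((hle.trans (hg r (hule)))) (le_refl (h (P.concl r)))⟩
    · push_neg at hall
      obtain ⟨i, hi⟩ := hall
      rcases IH i with hS | ⟨x, hx, hxle⟩
      · exact absurd hi hS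
      · exact Or.inr ⟨x, hx, hxle.trans (hmono r w hd i)⟩

end Aux

section Aux2

variable (P : PLDP) (h : P.Stmt → ℝ≥0∞)
variable (hfin : ∀ B, h B ≠ ⊤)
variable (hg : ∀ r : P.Rule, Monotone (P.g r))
variable (hmono : P.MonotoneHeuristic h)
variable (hpr : ∀ (r : P.Rule) (w : Fin (P.n r) → ℝ≥0∞),
      P.pr r w = P.g r w + h (P.concl r))

include hfin hg hmono hpr in
theorem inv_step {s s' : P.State} (hinv : AStarInv P h s) (hs : P.Step s s') :
    AStarInv P h s' := by
  cases hs with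
  | skip S Q B w q hmem hmin hold =>
    refine ⟨hinv.1, fun x hx => hinv.2.1 x hx.1, ?_⟩
    intro r w' hw'
    rcases hinv.2.2 r w' hw' with hS | ⟨u, hle, hmemQ⟩
    · exact Or.inl hS
    · by_cases hx : (P.concl r, u, u + h (P.concl r)) = (B, w, q)
      · left
        have : P.concl r = B := congrArg Prod.fst hx
        rw [this]; exact hold
      · exact Or.inr ⟨u, hle, hmemQ, hx⟩
  | expand S Q B w q hmem hmin hnew =>
    -- expanded weight is optimal
    have hq : q = w + h B := (hinv.2.1 _ hmem).2
    have hwopt : ∀ v, P.Derives B v → w ≤ v := by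
      intro v hv
      rcases astar_frontier P h hg hmono (S, Q) hinv hv with hS | ⟨x, hx, hxle⟩
      · exact absurd hnew hS
      · have : q ≤ v + h B := (hmin x hx).trans hxle
        rw [hq] at this
        exact (ENNReal.add_le_add_iff_right (hfin B)).mp this
    have hwder : P.Derives B w := (hinv.2.1 _ hmem).1
    have hS1 : ∀ C u, Function.update S B (some w) C = some u →
        P.Derives C u ∧ ∀ v, P.Derives C v → u ≤ v := by
      intro C u hC
      by_cases hCB : C = B
      · subst hCB
        rw [Function.update_self] at hC
        obtain rfl : w = u := by injection hC
        exact ⟨hwder, hwopt⟩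
      · rw [Function.update_of_ne hCB] at hC
        exact hinv.1 C u hC
    refine ⟨hS1, ?_, ?_⟩
    · -- queue items invariant
      rintro x (⟨hx, -⟩ | hx)
      · exact hinv.2.1 x hx
      · obtain ⟨r, w', hant, -, rfl⟩ := hx
        have hder : ∀ i, P.Derives (P.ant r i) (w' i) := fun i =>
          (hS1 _ _ (hant i)).1
        exact ⟨PLDP.Derives.step r w' hder, hpr r w'⟩
    · -- rule closure invariant
      intro r w' hw'
      by_cases hB : ∃ i, P.ant r i = B
      · right
        refine ⟨P.g r w', le_refl _, Or.inr ⟨r, w', hw', hB, ?_⟩⟩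
        rw [hpr r w']
      · have hw'' : ∀ i, S (P.ant r i) = some (w' i) := by
          intro i
          have := hw' i
          dsimp only at this
          rwa [Function.update_of_ne (fun hc => hB ⟨i, hc⟩)] at this
        by_cases hcB : P.concl r = B
        · left; show Function.update S B (some w) (P.concl r) ≠ none
          rw [hcB, Function.update_self]; simp
        · rcases hinv.2.2 r w' hw'' with hS | ⟨u, hle, hmemQ⟩
          · left; show Function.update S B (some w) (P.concl r) ≠ none
            rwa [Function.update_of_ne hcB]
          · exact Or.inr ⟨u, hle, Or.inl ⟨hmemQ, by
              simp only [Set.mem_singleton_iff, Prod.mk.injEq]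
              intro hc; exact hcB hc.1⟩⟩

include hpr in
theorem inv_init : AStarInv P h P.init := by
  refine ⟨fun C u hC => by simp [PLDP.init] at hC, ?_, ?_⟩
  · rintro x ⟨r, hn, w', rfl⟩
    have hd : ∀ i, P.Derives (P.ant r i) (w' i) := fun i => by
      exact absurd i.2 (by omega)
    exact ⟨PLDP.Derives.step r w' hd, hpr r w'⟩
  · intro r w hw
    by_cases hn : P.n r = 0
    · right
      refine ⟨P.g r w, le_refl _, ?_⟩
      show _ ∈ P.initQ
      refine ⟨r, hn, w, ?_⟩
      rw [hpr r w]
    · exfalso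
      have : 0 < P.n r := Nat.pos_of_ne_zero hn
      have := hw ⟨0, this⟩
      simp [PLDP.init] at this

include hfin hg hmono hpr in
theorem inv_reaches {s : P.State} (hr : P.Reaches s) : AStarInv P h s := by
  induction hr with
  | init => exact inv_init P h hpr
  | step s s' _ hs IH => exact inv_step P h hfin hg hmono hpr IH hs

include hfin hg hmono hpr in
/-- In an expand step, the expanded priority is a lower bound on the new queue. -/
theorem expand_lb {S : P.Stmt → Option ℝ≥0∞} {Q : Set (P.Stmt × ℝ≥0∞ × ℝ≥0∞)}
    {B : P.Stmt} {w q : ℝ≥0∞}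
    (hinv : AStarInv P h (S, Q)) (hmem : (B, w, q) ∈ Q) (hmin : ∀ x ∈ Q, q ≤ x.2.2)
    (hnew : S B = none) :
    ∀ x ∈ (Q \ {(B, w, q)}) ∪ P.newItems (Function.update S B (some w)) B,
      q ≤ x.2.2 := by
  have hinv' := inv_step P h hfin hg hmono hpr hinv
    (PLDP.Step.expand S Q B w q hmem hmin hnew)
  have hq : q = w + h B := (hinv.2.1 _ hmem).2
  rintro x (⟨hx, -⟩ | hx)
  · exact hmin x hx
  · obtain ⟨r, w', hant, ⟨i, hi⟩, rfl⟩ := hx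
    have hder : ∀ j, P.Derives (P.ant r j) (w' j) := fun j =>
      (hinv'.1 _ _ (hant j)).1
    have hwi : w' i = w := by
      have := hant i
      rw [hi, Function.update_self] at this
      injection this with h'; exact h'.symm
    have := hmono r w' hder i
    rw [hwi, hi] at this
    simpa [hpr r w', hq] using this

end Aux2


theorem min_priority_mono (P : PLDP) (h : P.Stmt → ℝ≥0∞)
    (hfin : ∀ B, h B ≠ ⊤) (hg : ∀ r : P.Rule, Monotone (P.g r))
    (hmono : P.MonotoneHeuristic h)
    (hpr : ∀ (r : P.Rule) (w : Fin (P.n r) → ℝ≥0∞),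
      P.pr r w = P.g r w + h (P.concl r))
    {s s' : P.State} (hinv : AStarInv P h s) (hs : P.Step s s') :
    sInf {q | ∃ B w, (B, w, q) ∈ s.2} ≤ sInf {q | ∃ B w, (B, w, q) ∈ s'.2} := by
  cases hs with
  | skip S Q B w q hmem hmin hold =>
    refine sInf_le_sInf ?_
    rintro p ⟨B', w', hp, -⟩
    exact ⟨B', w', hp⟩
  | expand S Q B w q hmem hmin hnew =>
    refine le_sInf ?_
    rintro p ⟨B', w', hp⟩
    have h1 : sInf {q | ∃ B w, (B, w, q) ∈ (S, Q).2} ≤ q :=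
      sInf_le ⟨B, w, hmem⟩
    exact h1.trans (expand_lb P h hfin hg hmono hpr hinv hmem hmin hnew _ hp)

theorem min_priority_chain (P : PLDP) (h : P.Stmt → ℝ≥0∞)
    (hfin : ∀ B, h B ≠ ⊤) (hg : ∀ r : P.Rule, Monotone (P.g r))
    (hmono : P.MonotoneHeuristic h)
    (hpr : ∀ (r : P.Rule) (w : Fin (P.n r) → ℝ≥0∞),
      P.pr r w = P.g r w + h (P.concl r))
    {s t : P.State} (hr : P.Reaches s) (hst : Relation.ReflTransGen P.Step s t) :
    P.Reaches t ∧
      sInf {q | ∃ B w, (B, w, q) ∈ s.2} ≤ sInf {q | ∃ B w, (B, w, q) ∈ t.2} := by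
  induction hst with
  | refl => exact ⟨hr, le_refl _⟩
  | tail hab hbc IH =>
    exact ⟨PLDP.Reaches.step _ _ IH.1 hbc,
      IH.2.trans (min_priority_mono P h hfin hg hmono hpr
        (inv_reaches P h hfin hg hmono hpr IH.1) hbc)⟩

/-- During the execution of A*LD with a monotone finite-valued
heuristic `h` (rules prioritized at `g(w_1,...,w_n) + h(C)`), statements are
expanded in non-decreasing order of their figure of merit `ℓ(B,R) + h(B)`;
equivalently, the minimum priority of the queue never decreases over the
run. -/
theorem astar_expands_in_merit_order (P : PLDP) [Finite P.Rule]
    (h : P.Stmt → ℝ≥0∞) (hfin : ∀ B, h B ≠ ⊤)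
    (hg : ∀ r : P.Rule, Monotone (P.g r))
    (hmono : P.MonotoneHeuristic h)
    (hpr : ∀ (r : P.Rule) (w : Fin (P.n r) → ℝ≥0∞),
      P.pr r w = P.g r w + h (P.concl r)) :
    -- the minimum priority of the queue never decreases
    (∀ s s' : P.State, P.Reaches s → P.Step s s' →
      sInf {q | ∃ B w, (B, w, q) ∈ s.2} ≤ sInf {q | ∃ B w, (B, w, q) ∈ s'.2}) ∧
    -- statements are expanded in non-decreasing order of figure of merit
    (∀ (s s' : P.State) (B : P.Stmt), P.Reaches s → P.StepExpands s s' B →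
      ∀ (t t' : P.State) (B' : P.Stmt), Relation.ReflTransGen P.Step s' t →
        P.StepExpands t t' B' → P.ell B + h B ≤ P.ell B' + h B') := by
  constructor
  · intro s s' hr hs
    exact min_priority_mono P h hfin hg hmono hpr
      (inv_reaches P h hfin hg hmono hpr hr) hs
  · intro s s' B hr ⟨hs, hBnone, hBsome⟩ t t' B' hst ⟨ht, hB'none, hB'some⟩
    have hrs' : P.Reaches s' := PLDP.Reaches.step _ _ hr hs
    obtain ⟨hrt, hchain⟩ := min_priority_chain P h hfin hg hmono hpr hrs' hst
    have hinvs : AStarInv P h s := inv_reaches P h hfin hg hmono hpr hr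
    have hinvt : AStarInv P h t := inv_reaches P h hfin hg hmono hpr hrt
    -- analyze the first expansion step
    cases hs with
    | skip S Q B0 w q hmem hmin hold => exact absurd hBnone hBsome
    | expand S Q B0 w q hmem hmin hnew =>
      have hBB0 : B = B0 := by
        by_contra hne
        apply hBsome
        show Function.update S B0 (some w) B = none
        rw [Function.update_of_ne hne]
        exact hBnone
      subst hBB0
      have hq : q = w + h B := (hinvs.2.1 _ hmem).2
      have h1 : P.ell B + h B ≤ q := by
        rw [hq]
        exact add_le_add_left (sInf_le (hinvs.2.1 _ hmem).1) _
      have h2 : q ≤ sInf {p | ∃ C u, (C, u, p) ∈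
          (Q \ {(B, w, q)}) ∪ P.newItems (Function.update S B (some w)) B} := by
        refine le_sInf ?_
        rintro p ⟨C, u, hp⟩
        exact expand_lb P h hfin hg hmono hpr hinvs hmem hmin hnew _ hp
      -- analyze the second expansion step
      cases ht with
      | skip S1 Q1 B1 w1 q1 hmem1 hmin1 hold1 => exact absurd hB'none hB'some
      | expand S1 Q1 B1 w1 q1 hmem1 hmin1 hnew1 =>
        have hBB1 : B' = B1 := by
          by_contra hne
          apply hB'some
          show Function.update S1 B1 (some w1) B' = none
          rw [Function.update_of_ne hne]
          exact hB'none
        subst hBB1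
        have h3 : sInf {p | ∃ C u, (C, u, p) ∈ (S1, Q1).2} ≤ q1 :=
          sInf_le ⟨B', w1, hmem1⟩
        have h4 : q1 ≤ P.ell B' + h B' := by
          have hub : ∀ v, P.Derives B' v → q1 ≤ v + h B' := by
            intro v hv
            rcases astar_frontier P h hg hmono (S1, Q1) hinvt hv with hS | ⟨x, hx, hxle⟩
            · exact absurd hB'none hS
            · exact (hmin1 x hx).trans hxle
          rw [PLDP.ell, ENNReal.sInf_add]
          exact le_iInf₂ fun v hv => hub v hv
        exact h1.trans (h2.trans (hchain.trans (h3.trans h4)))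
end

section
/- The execution of a finite set of prioritized rules P terminates and derives every statement that is derivable using the rules in P: upon termination, every derivable statement has a weight assigned in S. -/
open scoped ENNReal

attribute [local instance] Classical.propDecidable

namespace PLDP

variable (P : PLDP)

/-- The invariant maintained by the execution. -/
def Inv (s : P.State) : Prop :=
  s.2.Finite ∧
  (∀ x ∈ s.2, ∃ r : P.Rule, x.1 = P.concl r) ∧
  (∀ (r : P.Rule) (w : Fin (P.n r) → ℝ≥0∞),
     (∀ i, s.1 (P.ant r i) = some (w i)) →
     (∃ w' q, (P.concl r, w', q) ∈ s.2) ∨ s.1 (P.concl r) ≠ none)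

lemma initQ_subset :
    P.initQ ⊆ Set.range (fun r : P.Rule =>
      (P.concl r, P.g r (fun _ => 0), P.pr r (fun _ => 0))) := by
  rintro x ⟨r, h0, w, rfl⟩
  refine ⟨r, ?_⟩
  have hw : w = fun _ => (0 : ℝ≥0∞) := by
    funext i; exact absurd i.isLt (by omega)
  subst hw; rfl

lemma newItems_subset (S : P.Stmt → Option ℝ≥0∞) (B : P.Stmt) :
    P.newItems S B ⊆ Set.range (fun r : P.Rule =>
      (P.concl r, P.g r (fun i => (S (P.ant r i)).getD 0),
        P.pr r (fun i => (S (P.ant r i)).getD 0))) := by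
  rintro x ⟨r, w, hw, -, rfl⟩
  refine ⟨r, ?_⟩
  have hww : (fun i => (S (P.ant r i)).getD 0) = w := by
    funext i; rw [hw i]; rfl
  subst hww; rfl

lemma newItems_finite [Finite P.Rule] (S : P.Stmt → Option ℝ≥0∞) (B : P.Stmt) :
    (P.newItems S B).Finite :=
  Set.Finite.subset (Set.finite_range _) (P.newItems_subset S B)

lemma newItems_ncard_le [Finite P.Rule] (S : P.Stmt → Option ℝ≥0∞) (B : P.Stmt) :
    (P.newItems S B).ncard ≤ Nat.card P.Rule := by
  calc (P.newItems S B).ncard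
      ≤ (Set.range (fun r : P.Rule =>
          (P.concl r, P.g r (fun i => (S (P.ant r i)).getD 0),
            P.pr r (fun i => (S (P.ant r i)).getD 0)))).ncard :=
        Set.ncard_le_ncard (P.newItems_subset S B) (Set.finite_range _)
    _ ≤ (Set.univ : Set P.Rule).ncard := by
        rw [← Set.image_univ]; exact Set.ncard_image_le (Set.finite_univ)
    _ = Nat.card P.Rule := Set.ncard_univ _

lemma inv_init [Finite P.Rule] : P.Inv P.init := by
  refine ⟨Set.Finite.subset (Set.finite_range _) P.initQ_subset, ?_, ?_⟩
  · rintro x ⟨r, h0, w, rfl⟩; exact ⟨r, rfl⟩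
  · intro r w hw
    by_cases h0 : P.n r = 0
    · exact Or.inl ⟨P.g r w, P.pr r w, ⟨r, h0, w, rfl⟩⟩
    · exact absurd (hw ⟨0, Nat.pos_of_ne_zero h0⟩) (by simp [PLDP.init])

lemma inv_step [Finite P.Rule] {s s' : P.State} (h : P.Inv s) (hs : P.Step s s') :
    P.Inv s' := by
  obtain ⟨hfin, hconcl, hrule⟩ := h
  cases hs with
  | skip S Q B w q hmem hmin hold =>
    refine ⟨hfin.subset Set.diff_subset, fun x hx => hconcl x hx.1, ?_⟩
    intro r v hv
    rcases hrule r v hv with ⟨w', q', hin⟩ | hne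
    · by_cases heq : ((P.concl r, w', q') : P.Stmt × ℝ≥0∞ × ℝ≥0∞) = (B, w, q)
      · right
        have : P.concl r = B := congrArg Prod.fst heq
        rw [this]; exact hold
      · exact Or.inl ⟨w', q', hin, heq⟩
    · exact Or.inr hne
  | expand S Q B w q hmem hmin hnew =>
    refine ⟨(hfin.subset Set.diff_subset).union (P.newItems_finite _ B), ?_, ?_⟩
    · rintro x (hx | ⟨r, v, -, -, rfl⟩)
      · exact hconcl x hx.1
      · exact ⟨r, rfl⟩
    · intro r v hv
      by_cases hB : ∃ i, P.ant r i = B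
      · exact Or.inl ⟨P.g r v, P.pr r v, Or.inr ⟨r, v, hv, hB, rfl⟩⟩
      · push_neg at hB
        have hv' : ∀ i, S (P.ant r i) = some (v i) := by
          intro i
          have h2 : Function.update S B (some w) (P.ant r i) = some (v i) := hv i
          rwa [Function.update_of_ne (hB i)] at h2
        rcases hrule r v hv' with ⟨w', q', hin⟩ | hne
        · by_cases heq : ((P.concl r, w', q') : P.Stmt × ℝ≥0∞ × ℝ≥0∞) = (B, w, q)
          · right
            have hcb : P.concl r = B := congrArg Prod.fst heq
            show Function.update S B (some w) (P.concl r) ≠ none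
            rw [hcb, Function.update_self]; simp
          · exact Or.inl ⟨w', q', Or.inl ⟨hin, heq⟩⟩
        · right
          show Function.update S B (some w) (P.concl r) ≠ none
          by_cases hcb : P.concl r = B
          · rw [hcb, Function.update_self]; simp
          · rw [Function.update_of_ne hcb]; exact hne

lemma inv_reaches [Finite P.Rule] {s : P.State} (h : P.Reaches s) : P.Inv s := by
  induction h with
  | init => exact P.inv_init
  | step s s' _ hs ih => exact P.inv_step ih hs

/-- Termination measure. -/
noncomputable def mu (s : P.State) : ℕ :=
  {r : P.Rule | s.1 (P.concl r) = none}.ncard * (Nat.card P.Rule + 1) + s.2.ncard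

lemma mu_decreases [Finite P.Rule] {s s' : P.State} (h : P.Inv s)
    (hs : P.Step s s') : P.mu s' < P.mu s := by
  obtain ⟨hfin, hconcl, -⟩ := h
  cases hs with
  | skip S Q B w q hmem hmin hold =>
    have : ((Q \ {(B, w, q)}).ncard) < Q.ncard :=
      Set.ncard_diff_singleton_lt_of_mem hmem hfin
    simp only [mu]; omega
  | expand S Q B w q hmem hmin hnew =>
    obtain ⟨r₀, hr₀⟩ := hconcl _ hmem
    have hB : P.concl r₀ = B := hr₀.symm
    have hssub : {r : P.Rule | Function.update S B (some w) (P.concl r) = none}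
        ⊂ {r : P.Rule | S (P.concl r) = none} := by
      constructor
      · intro r hr
        simp only [Set.mem_setOf_eq, Function.update_apply] at hr ⊢
        by_cases hcb : P.concl r = B
        · simp [hcb] at hr
        · simpa [hcb] using hr
      · intro hsub
        have h1 : r₀ ∈ {r : P.Rule | S (P.concl r) = none} := by
          simp only [Set.mem_setOf_eq, hB]; exact hnew
        have h2 := hsub h1
        simp only [Set.mem_setOf_eq] at h2
        rw [hB, Function.update_self] at h2
        exact Option.some_ne_none _ h2
    have hm : {r : P.Rule | Function.update S B (some w) (P.concl r) = none}.ncard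
        < {r : P.Rule | S (P.concl r) = none}.ncard :=
      Set.ncard_lt_ncard hssub (Set.toFinite _)
    have hq1 : ((Q \ {(B, w, q)}) ∪ P.newItems (Function.update S B (some w)) B).ncard
        ≤ (Q \ {(B, w, q)}).ncard + (P.newItems (Function.update S B (some w)) B).ncard :=
      Set.ncard_union_le _ _
    have hq2 : (Q \ {(B, w, q)}).ncard < Q.ncard :=
      Set.ncard_diff_singleton_lt_of_mem hmem hfin
    have hq3 := P.newItems_ncard_le (Function.update S B (some w)) B
    set a := {r : P.Rule | Function.update S B (some w) (P.concl r) = none}.ncard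
    set b := {r : P.Rule | S (P.concl r) = none}.ncard
    set R := Nat.card P.Rule
    have key : (a + 1) * (R + 1) ≤ b * (R + 1) := Nat.mul_le_mul_right _ hm
    simp only [mu]
    nlinarith [key, hq1, hq2, hq3]

end PLDP

/-- The execution of a finite set of prioritized rules `P`
terminates (there is no infinite execution sequence) and derives every
statement that is derivable using the rules in `P`: upon termination (when the
queue is empty and no step applies), every derivable statement has a weight
assigned in `S`. -/
theorem execution_terminates_and_complete (P : PLDP) [Finite P.Rule] :
    -- termination: there is no infinite execution sequence from the initial state
    (¬ ∃ f : ℕ → P.State, f 0 = P.init ∧ ∀ k, P.Step (f k) (f (k + 1))) ∧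
    -- completeness: at a terminal reachable state, every derivable statement
    -- has an assigned weight in S
    (∀ s : P.State, P.Reaches s → (∀ s', ¬ P.Step s s') →
      ∀ (B : P.Stmt) (w : ℝ≥0∞), P.Derives B w → ∃ w', s.1 B = some w') := by
  constructor
  · rintro ⟨f, hf0, hfs⟩
    have hreach : ∀ k, P.Reaches (f k) := by
      intro k
      induction k with
      | zero => rw [hf0]; exact .init
      | succ k ih => exact .step _ _ ih (hfs k)
    have hmu : ∀ k, P.mu (f (k + 1)) < P.mu (f k) :=
      fun k => P.mu_decreases (P.inv_reaches (hreach k)) (hfs k)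
    have hle : ∀ k, P.mu (f k) + k ≤ P.mu (f 0) := by
      intro k
      induction k with
      | zero => simp
      | succ k ih => have := hmu k; omega
    have := hle (P.mu (f 0) + 1); omega
  · intro s hre hterm B w hD
    obtain ⟨S, Q⟩ := s
    have hinv := P.inv_reaches hre
    have hQ : Q = ∅ := by
      by_contra hne
      obtain ⟨a, ha, hmin⟩ :=
        Set.exists_min_image Q (fun x => x.2.2) hinv.1
          (Set.nonempty_iff_ne_empty.mpr hne)
      obtain ⟨B', w', q'⟩ := a
      by_cases hS : S B' = none
      · exact hterm _ (.expand S Q B' w' q' ha (fun x hx => hmin x hx) hS)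
      · exact hterm _ (.skip S Q B' w' q' ha (fun x hx => hmin x hx) hS)
    subst hQ
    induction hD with
    | step r v _ ih =>
      choose u hu using ih
      rcases hinv.2.2 r u hu with ⟨w', q', hin⟩ | hne
      · exact absurd hin (by simp)
      · exact Option.ne_none_iff_exists'.mp hne
end

section
/- HA*LD expands at most 2K generalized statements before computing a lightest derivation of goal, where K is the number of statements C in the abstraction hierarchy with p(C) ≤ ℓ(goal). -/
open scoped ENNReal

/-- A lightest derivation problem with additive rules: each rule
`A_1,...,A_n →_v C` assigns to the conclusion the weight `v` plus the sum of
the antecedent weights, with `v ≥ 0`. -/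
structure ALDP where
  Stmt : Type
  Rule : Type
  n : Rule → ℕ
  ant : (r : Rule) → Fin (n r) → Stmt
  concl : Rule → Stmt
  v : Rule → ℝ≥0∞

namespace ALDP

/-- Derivability of a weight assignment `(B = w)`: there is a derivation tree
for `B` whose weight (sum of the weights of the rules in it) is `w`. -/
inductive Derives (P : ALDP) : P.Stmt → ℝ≥0∞ → Prop
  | step (r : P.Rule) (w : Fin (P.n r) → ℝ≥0∞)
      (hd : ∀ i, Derives P (P.ant r i) (w i)) :
      Derives P (P.concl r) (P.v r + ∑ i, w i)

/-- `ℓ(B,R)`, the infimum of the weights derivable for `B`. -/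
noncomputable def ell (P : ALDP) (B : P.Stmt) : ℝ≥0∞ := sInf {w | P.Derives B w}

/-- `CtxDerives P goal B u` : `B` has a context of weight `u`, i.e. a
derivation of `goal` with a hole that can be filled in by a derivation of `B`;
the weight of a context is the sum of the weights of the rules in it. -/
inductive CtxDerives (P : ALDP) (goal : P.Stmt) : P.Stmt → ℝ≥0∞ → Prop
  | base : CtxDerives P goal goal 0
  | step (r : P.Rule) (i : Fin (P.n r)) (u : ℝ≥0∞) (w : Fin (P.n r) → ℝ≥0∞)
      (hc : CtxDerives P goal (P.concl r) u)
      (hd : ∀ j, j ≠ i → P.Derives (P.ant r j) (w j)) :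
      CtxDerives P goal (P.ant r i) (u + P.v r + ∑ j ∈ Finset.univ.erase i, w j)

/-- `ℓ(context(B),R)`, the weight of a lightest context for `B`. -/
noncomputable def ellCtx (P : ALDP) (goal B : P.Stmt) : ℝ≥0∞ :=
  sInf {u | P.CtxDerives goal B u}

/-- `(Q, abs)` is an abstraction of `P`: for every rule
`A_1,...,A_n →_v C` of `P` there is a rule
`abs(A_1),...,abs(A_n) →_{v'} abs(C)` of `Q` with `v' ≤ v`. -/
def IsAbstraction (P Q : ALDP) (abs : P.Stmt → Q.Stmt) : Prop :=
  ∀ r : P.Rule, ∃ r' : Q.Rule, ∃ e : Q.n r' = P.n r,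
    (∀ i : Fin (P.n r), Q.ant r' (Fin.cast e.symm i) = abs (P.ant r i)) ∧
    Q.concl r' = abs (P.concl r) ∧ Q.v r' ≤ P.v r

/-- A heuristic `h` is monotone (for additive rules) if for every rule
`A_1,...,A_n →_v C` and derivable weight assignments `(A_i = w_i)`,
`w_i + h(A_i) ≤ v + w_1 + ... + w_n + h(C)`. -/
def MonotoneHeuristic (P : ALDP) (h : P.Stmt → ℝ≥0∞) : Prop :=
  ∀ (r : P.Rule) (w : Fin (P.n r) → ℝ≥0∞),
    (∀ i, P.Derives (P.ant r i) (w i)) →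
    ∀ i, w i + h (P.ant r i) ≤ P.v r + (∑ j, w j) + h (P.concl r)

end ALDP
attribute [local instance] Classical.propDecidable

/-- An abstraction hierarchy with `m` levels: additive lightest derivation
problems `(Σ_k, R_k)` for `0 ≤ k ≤ m-1`, goal statements `goal_k`, and
abstraction maps `abs : Σ_k → Σ_{k+1}` such that each level abstracts the one
below and `goal_{k+1} = abs(goal_k)`.  (The most abstract level `Σ_m = {⊥}` is
represented separately below.) -/
structure Hier (m : ℕ) where
  P : Fin m → ALDP
  goal : (k : Fin m) → (P k).Stmt
  abs : (k : Fin m) → (hk : k.1 + 1 < m) → (P k).Stmt → (P ⟨k.1 + 1, hk⟩).Stmt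
  hgoal : ∀ (k : Fin m) (hk : k.1 + 1 < m), goal ⟨k.1 + 1, hk⟩ = abs k hk (goal k)
  habs : ∀ (k : Fin m) (hk : k.1 + 1 < m),
    ALDP.IsAbstraction (P k) (P ⟨k.1 + 1, hk⟩) (abs k hk)

/-- Generalized statements: statements `C ∈ Σ_k`, contexts `context(C)` for
`C ∈ Σ_k`, the most abstract statement `⊥ ∈ Σ_m`, and `context(⊥)`. -/
inductive GStmt {m : ℕ} (H : Hier m) : Type
  | stmt (k : Fin m) (C : (H.P k).Stmt)
  | ctx (k : Fin m) (C : (H.P k).Stmt)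
  | bot
  | botctx

namespace Hier

variable {m : ℕ} (H : Hier m)

/-- `ℓ(Φ)`: the lightest derivation weight for statements, the lightest
context weight for contexts (at the appropriate level), and `0` for `⊥` and
`context(⊥)`. -/
noncomputable def ellG : GStmt H → ℝ≥0∞
  | .stmt k C => (H.P k).ell C
  | .ctx k C => (H.P k).ellCtx (H.goal k) C
  | .bot => 0
  | .botctx => 0

/-- The generalized statement `context(abs(C))` for `C ∈ Σ_k`: it lives one
level up, or is `context(⊥)` if `k` is the most abstract concrete level. -/
noncomputable def absCtx (k : Fin m) (C : (H.P k).Stmt) : GStmt H :=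
  if hk : k.1 + 1 < m then .ctx ⟨k.1 + 1, hk⟩ (H.abs k hk C) else .botctx

/-- The heuristic: `h(C) = ℓ(context(abs(C)))`, `h(context(C)) = ℓ(C)`, and
`h(⊥) = h(context(⊥)) = 0`. -/
noncomputable def hG : GStmt H → ℝ≥0∞
  | .stmt k C => H.ellG (H.absCtx k C)
  | .ctx k C => (H.P k).ell C
  | .bot => 0
  | .botctx => 0

/-- The intrinsic priority `p(Φ) = ℓ(Φ) + h(Φ)`. -/
noncomputable def pG (Φ : GStmt H) : ℝ≥0∞ := H.ellG Φ + H.hG Φ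

end Hier

/-- The rules of HA*LD: START1, START2, BASE (for each level `k`), UP (for
each rule of `R_k`) and DOWN (for each rule of `R_k` and antecedent index). -/
inductive HRule {m : ℕ} (H : Hier m) : Type
  | start1
  | start2
  | base (k : Fin m)
  | up (k : Fin m) (r : (H.P k).Rule)
  | down (k : Fin m) (r : (H.P k).Rule) (i : Fin ((H.P k).n r))

/-- The prioritized rules `H` defining HA*LD.
START1/START2 derive `(⊥ = 0)` and `(context(⊥) = 0)` at priority `0`;
BASE derives `(context(goal_k) = 0)` from `(goal_k = w)` at priority `w`;
UP derives `(C = v + Σ w_i)` from `(context(abs(C)) = w_c)` and `(A_i = w_i)`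
at priority `v + Σ w_i + w_c`;
DOWN derives `(context(A_i) = v + w_c + Σ_{j≠i} w_j)` from
`(context(C) = w_c)` and `(A_j = w_j)` at priority `v + w_c + Σ_j w_j`. -/
noncomputable def Hier.toPLDP {m : ℕ} (H : Hier m) : PLDP where
  Stmt := GStmt H
  Rule := HRule H
  n := fun r => match r with
    | .start1 => 0
    | .start2 => 0
    | .base _ => 1
    | .up k r => (H.P k).n r + 1
    | .down k r _ => (H.P k).n r + 1
  ant := fun r => match r with
    | .start1 => Fin.elim0
    | .start2 => Fin.elim0
    | .base k => fun _ => .stmt k (H.goal k)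
    | .up k r => Fin.cases (H.absCtx k ((H.P k).concl r))
        (fun i => .stmt k ((H.P k).ant r i))
    | .down k r _ => Fin.cases (.ctx k ((H.P k).concl r))
        (fun j => .stmt k ((H.P k).ant r j))
  concl := fun r => match r with
    | .start1 => .bot
    | .start2 => .botctx
    | .base k => .ctx k (H.goal k)
    | .up k r => .stmt k ((H.P k).concl r)
    | .down k r i => .ctx k ((H.P k).ant r i)
  g := fun r => match r with
    | .start1 => fun _ => 0
    | .start2 => fun _ => 0
    | .base _ => fun _ => 0
    | .up k r => fun w => (H.P k).v r + ∑ i : Fin ((H.P k).n r), w i.succ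
    | .down k r i => fun w =>
        (H.P k).v r + w 0 + ∑ j ∈ (Finset.univ : Finset (Fin ((H.P k).n r))).erase i, w j.succ
  pr := fun r => match r with
    | .start1 => fun _ => 0
    | .start2 => fun _ => 0
    | .base _ => fun w => w 0
    | .up k r => fun w => (H.P k).v r + (∑ i : Fin ((H.P k).n r), w i.succ) + w 0
    | .down k r _ => fun w => (H.P k).v r + w 0 + ∑ j : Fin ((H.P k).n r), w j.succ

/-- `Φ` is a statement of the abstraction hierarchy (as opposed to a
context). -/
def GStmt.IsStmt {m : ℕ} {H : Hier m} : GStmt H → Prop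
  | .stmt _ _ => True
  | .bot => True
  | _ => False

section HALDProof

open ALDP PLDP

namespace Hier

variable {m : ℕ} (H : Hier m)

/-- Generalized derivability. -/
def DerG : GStmt H → ℝ≥0∞ → Prop
  | .stmt k C, w => (H.P k).Derives C w
  | .ctx k C, w => (H.P k).CtxDerives (H.goal k) C w
  | .bot, w => w = 0
  | .botctx, w => w = 0

lemma ellG_le_of_derG {Φ : GStmt H} {w : ℝ≥0∞} (h : H.DerG Φ w) : H.ellG Φ ≤ w := by
  cases Φ with
  | stmt k C => exact sInf_le h
  | ctx k C => exact sInf_le h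
  | bot => simp [ellG, h]
  | botctx => simp [ellG, h]

lemma sum_cast_eq {n n' : ℕ} (e : n' = n) (f : Fin n → ℝ≥0∞) :
    (∑ j : Fin n', f (Fin.cast e j)) = ∑ j : Fin n, f j := by
  subst e; rfl

lemma sum_erase_cast_eq {n n' : ℕ} (e : n' = n) (i : Fin n) (f : Fin n → ℝ≥0∞) :
    (∑ j ∈ Finset.univ.erase (Fin.cast e.symm i), f (Fin.cast e j)) =
      ∑ j ∈ Finset.univ.erase i, f j := by
  subst e; rfl

lemma sum_split_at {n : ℕ} (i : Fin n) (f : Fin n → ℝ≥0∞) :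
    (∑ j : Fin n, f j) = f i + ∑ j ∈ Finset.univ.erase i, f j :=
  (Finset.add_sum_erase _ f (Finset.mem_univ i)).symm

/-- Abstraction of a derivation. -/
lemma absDerives (k : Fin m) (hk : k.1 + 1 < m) {C : (H.P k).Stmt} {w : ℝ≥0∞}
    (h : (H.P k).Derives C w) :
    ∃ w' ≤ w, (H.P ⟨k.1 + 1, hk⟩).Derives (H.abs k hk C) w' := by
  induction h with
  | step r wv hd ih =>
    obtain ⟨r', e, hant, hconcl, hv⟩ := H.habs k hk r
    choose wa hwa1 hwa2 using ih
    refine ⟨(H.P ⟨k.1+1,hk⟩).v r' + ∑ j : Fin ((H.P ⟨k.1+1,hk⟩).n r'), wa (Fin.cast e j), ?_, ?_⟩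
    · rw [sum_cast_eq e wa]
      exact add_le_add hv (Finset.sum_le_sum fun i _ => hwa1 i)
    · have := ALDP.Derives.step (P := H.P ⟨k.1+1,hk⟩) r' (fun j => wa (Fin.cast e j))
        (fun j => by
          have h1 := hant (Fin.cast e j)
          have h2 : Fin.cast e.symm (Fin.cast e j) = j := rfl
          rw [h2] at h1
          rw [h1]; exact hwa2 (Fin.cast e j))
      rwa [hconcl] at this

/-- Abstraction of a context derivation. -/
lemma absCtxDerives (k : Fin m) (hk : k.1 + 1 < m) {C : (H.P k).Stmt} {u : ℝ≥0∞}
    (h : (H.P k).CtxDerives (H.goal k) C u) :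
    ∃ u' ≤ u, (H.P ⟨k.1 + 1, hk⟩).CtxDerives (H.goal ⟨k.1+1,hk⟩) (H.abs k hk C) u' := by
  induction h with
  | base =>
    refine ⟨0, le_refl _, ?_⟩
    rw [← H.hgoal k hk]
    exact ALDP.CtxDerives.base
  | step r i u wv hc hd ih =>
    obtain ⟨u', hu', hcu'⟩ := ih
    obtain ⟨r', e, hant, hconcl, hv⟩ := H.habs k hk r
    have hda : ∀ j, ∃ w', (j ≠ i → (w' ≤ wv j ∧
        (H.P ⟨k.1+1,hk⟩).Derives (H.abs k hk ((H.P k).ant r j)) w')) := by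
      intro j
      by_cases hj : j = i
      · exact ⟨0, fun h => absurd hj h⟩
      · obtain ⟨w', hw1, hw2⟩ := H.absDerives k hk (hd j hj)
        exact ⟨w', fun _ => ⟨hw1, hw2⟩⟩
    choose wa hwa using hda
    refine ⟨u' + (H.P ⟨k.1+1,hk⟩).v r' +
      ∑ j ∈ Finset.univ.erase (Fin.cast e.symm i), wa (Fin.cast e j), ?_, ?_⟩
    · rw [sum_erase_cast_eq e i wa]
      refine add_le_add (add_le_add hu' hv) (Finset.sum_le_sum fun j hj => ?_)
      exact (hwa j (Finset.ne_of_mem_erase hj)).1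
    · rw [← hconcl] at hcu'
      have hstep := ALDP.CtxDerives.step (P := H.P ⟨k.1+1,hk⟩) r' (Fin.cast e.symm i) u'
        (fun j => wa (Fin.cast e j)) hcu'
        (fun j hj => by
          have h1 := hant (Fin.cast e j)
          have h2 : Fin.cast e.symm (Fin.cast e j) = j := rfl
          rw [h2] at h1
          rw [h1]
          refine (hwa (Fin.cast e j) ?_).2
          intro hcontra
          exact hj (by rw [← hcontra]; rfl))
      have hi : (H.P ⟨k.1+1,hk⟩).ant r' (Fin.cast e.symm i) = H.abs k hk ((H.P k).ant r i) :=
        hant i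
      rwa [hi] at hstep

lemma derG_absCtx_goal_zero (k : Fin m) : H.DerG (H.absCtx k (H.goal k)) 0 := by
  unfold absCtx
  split
  · rename_i hk
    show (H.P ⟨k.1+1,hk⟩).CtxDerives _ _ 0
    rw [H.hgoal k hk]
    exact ALDP.CtxDerives.base
  · rfl

lemma ellG_absCtx_le (k : Fin m) (C : (H.P k).Stmt) :
    H.ellG (H.absCtx k C) ≤ (H.P k).ellCtx (H.goal k) C := by
  refine le_sInf fun u hu => ?_
  unfold absCtx
  split
  · rename_i hk
    obtain ⟨u', hu', hc⟩ := H.absCtxDerives k hk hu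
    exact le_trans (sInf_le hc) hu'
  · exact zero_le

lemma pG_stmt_le_pG_ctx (k : Fin m) (C : (H.P k).Stmt) :
    H.pG (.stmt k C) ≤ H.pG (.ctx k C) := by
  show H.ellG (.stmt k C) + H.hG (.stmt k C) ≤ H.ellG (.ctx k C) + H.hG (.ctx k C)
  have h1 : H.ellG (.stmt k C) = (H.P k).ell C := rfl
  have h2 : H.hG (.stmt k C) = H.ellG (H.absCtx k C) := rfl
  have h3 : H.ellG (.ctx k C) = (H.P k).ellCtx (H.goal k) C := rfl
  have h4 : H.hG (.ctx k C) = (H.P k).ell C := rfl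
  rw [h1, h2, h3, h4, add_comm ((H.P k).ellCtx (H.goal k) C)]
  exact add_le_add le_rfl (H.ellG_absCtx_le k C)

lemma pG_bot_eq : H.pG (.bot) = 0 := by simp [pG, ellG, hG]

end Hier

end HALDProof
namespace Hier

variable {m : ℕ} (H : Hier m)

lemma absCtx_eq_ctx (k : Fin m) (hk : k.1 + 1 < m) (C : (H.P k).Stmt) :
    H.absCtx k C = .ctx ⟨k.1+1, hk⟩ (H.abs k hk C) := dif_pos hk

lemma absCtx_eq_botctx (k : Fin m) (hk : ¬ k.1 + 1 < m) (C : (H.P k).Stmt) :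
    H.absCtx k C = .botctx := dif_neg hk

@[simp] lemma tp_n_up (k : Fin m) (r : (H.P k).Rule) :
    H.toPLDP.n (.up k r) = (H.P k).n r + 1 := rfl
@[simp] lemma tp_ant_up_zero (k : Fin m) (r : (H.P k).Rule) :
    H.toPLDP.ant (.up k r) (0 : Fin ((H.P k).n r + 1)) = H.absCtx k ((H.P k).concl r) := rfl
@[simp] lemma tp_ant_up_succ (k : Fin m) (r : (H.P k).Rule) (i : Fin ((H.P k).n r)) :
    H.toPLDP.ant (.up k r) i.succ = .stmt k ((H.P k).ant r i) := rfl
@[simp] lemma tp_ant_down_zero (k : Fin m) (r : (H.P k).Rule) (i : Fin ((H.P k).n r)) :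
    H.toPLDP.ant (.down k r i) (0 : Fin ((H.P k).n r + 1)) = .ctx k ((H.P k).concl r) := rfl
@[simp] lemma tp_ant_down_succ (k : Fin m) (r : (H.P k).Rule) (i j : Fin ((H.P k).n r)) :
    H.toPLDP.ant (.down k r i) j.succ = .stmt k ((H.P k).ant r j) := rfl
@[simp] lemma tp_ant_base (k : Fin m) (i : Fin 1) :
    H.toPLDP.ant (.base k) i = .stmt k (H.goal k) := rfl
@[simp] lemma tp_concl_up (k : Fin m) (r : (H.P k).Rule) :
    H.toPLDP.concl (.up k r) = .stmt k ((H.P k).concl r) := rfl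
@[simp] lemma tp_concl_down (k : Fin m) (r : (H.P k).Rule) (i : Fin ((H.P k).n r)) :
    H.toPLDP.concl (.down k r i) = .ctx k ((H.P k).ant r i) := rfl
@[simp] lemma tp_concl_base (k : Fin m) :
    H.toPLDP.concl (.base k) = .ctx k (H.goal k) := rfl
@[simp] lemma tp_g_up (k : Fin m) (r : (H.P k).Rule) (w : Fin ((H.P k).n r + 1) → ℝ≥0∞) :
    H.toPLDP.g (.up k r) w = (H.P k).v r + ∑ i : Fin ((H.P k).n r), w i.succ := rfl
@[simp] lemma tp_pr_up (k : Fin m) (r : (H.P k).Rule) (w : Fin ((H.P k).n r + 1) → ℝ≥0∞) :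
    H.toPLDP.pr (.up k r) w
      = (H.P k).v r + (∑ i : Fin ((H.P k).n r), w i.succ) + w 0 := rfl
@[simp] lemma tp_g_down (k : Fin m) (r : (H.P k).Rule) (i : Fin ((H.P k).n r))
    (w : Fin ((H.P k).n r + 1) → ℝ≥0∞) :
    H.toPLDP.g (.down k r i) w
      = (H.P k).v r + w 0 + ∑ j ∈ Finset.univ.erase i, w j.succ := rfl
@[simp] lemma tp_pr_down (k : Fin m) (r : (H.P k).Rule) (i : Fin ((H.P k).n r))
    (w : Fin ((H.P k).n r + 1) → ℝ≥0∞) :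
    H.toPLDP.pr (.down k r i) w
      = (H.P k).v r + w 0 + ∑ j : Fin ((H.P k).n r), w j.succ := rfl
@[simp] lemma tp_g_base (k : Fin m) (w : Fin 1 → ℝ≥0∞) :
    H.toPLDP.g (.base k) w = 0 := rfl
@[simp] lemma tp_pr_base (k : Fin m) (w : Fin 1 → ℝ≥0∞) :
    H.toPLDP.pr (.base k) w = w 0 := rfl

/-- soundness of a single HA*LD rule step. -/
lemma sound_step (r : HRule H) (w : Fin (H.toPLDP.n r) → ℝ≥0∞)
    (hd : ∀ i, H.DerG (H.toPLDP.ant r i) (w i)) :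
    H.DerG (H.toPLDP.concl r) (H.toPLDP.g r w) := by
  cases r with
  | start1 => rfl
  | start2 => rfl
  | base k => exact ALDP.CtxDerives.base
  | up k r =>
    exact ALDP.Derives.step r (fun i => w i.succ) (fun i => hd i.succ)
  | down k r i =>
    have h0 : (H.P k).CtxDerives (H.goal k) ((H.P k).concl r)
        (w (0 : Fin ((H.P k).n r + 1))) := hd (0 : Fin ((H.P k).n r + 1))
    have hj : ∀ j, j ≠ i → (H.P k).Derives ((H.P k).ant r j) (w j.succ) :=
      fun j _ => hd j.succ
    have hstep := ALDP.CtxDerives.step r i (w (0 : Fin ((H.P k).n r + 1)))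
      (fun j => w j.succ) h0 hj
    have heq : w (0 : Fin ((H.P k).n r + 1)) + (H.P k).v r
          + (∑ j ∈ Finset.univ.erase i, w j.succ)
        = (H.P k).v r + w (0 : Fin ((H.P k).n r + 1))
          + ∑ j ∈ Finset.univ.erase i, w j.succ := by ring
    rw [heq] at hstep
    exact hstep

end Hier
lemma Option.eq_none_of_not_exists {α} {o : Option α} (h : ¬ ∃ v, o = some v) :
    o = none := by
  cases o with
  | none => rfl
  | some v => exact absurd ⟨v, rfl⟩ h

namespace Hier

variable {m : ℕ} (H : Hier m)

lemma derG_absCtx_of_ctx (k : Fin m) {C : (H.P k).Stmt} {u : ℝ≥0∞}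
    (h : (H.P k).CtxDerives (H.goal k) C u) :
    ∃ ua ≤ u, H.DerG (H.absCtx k C) ua := by
  by_cases hk : k.1 + 1 < m
  · obtain ⟨u', hu', h'⟩ := H.absCtxDerives k hk h
    exact ⟨u', hu', by rw [absCtx_eq_ctx H k hk]; exact h'⟩
  · exact ⟨0, zero_le, by rw [absCtx_eq_botctx H k hk]; rfl⟩

/-- Budget construction: given a context budget for the conclusion of a rule,
every antecedent gets a context budget with the telescoping bound. -/
lemma budget_lemma (k : Fin m) (r : (H.P k).Rule) {c : ℝ≥0∞}
    (hc : H.DerG (H.absCtx k ((H.P k).concl r)) c)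
    (wv : Fin ((H.P k).n r) → ℝ≥0∞)
    (hd : ∀ j, (H.P k).Derives ((H.P k).ant r j) (wv j)) :
    ∀ i, ∃ ci, H.DerG (H.absCtx k ((H.P k).ant r i)) ci ∧
      wv i + ci ≤ (H.P k).v r + (∑ j, wv j) + c := by
  intro i
  by_cases hk : k.1 + 1 < m
  · rw [absCtx_eq_ctx H k hk] at hc
    obtain ⟨r', e, hant, hconcl, hv⟩ := H.habs k hk r
    choose wa hwa1 hwa2 using fun j => H.absDerives k hk (hd j)
    refine ⟨c + (H.P ⟨k.1+1,hk⟩).v r'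
        + ∑ j ∈ Finset.univ.erase (Fin.cast e.symm i), wa (Fin.cast e j), ?_, ?_⟩
    · rw [absCtx_eq_ctx H k hk]
      have hstep := ALDP.CtxDerives.step (P := H.P ⟨k.1+1,hk⟩) r' (Fin.cast e.symm i) c
        (fun j => wa (Fin.cast e j)) (hconcl ▸ hc)
        (fun j hj => by
          have h1 := hant (Fin.cast e j)
          have h2 : Fin.cast e.symm (Fin.cast e j) = j := rfl
          rw [h2] at h1
          rw [h1]
          exact hwa2 (Fin.cast e j))
      rwa [hant i] at hstep
    · rw [sum_erase_cast_eq e i wa]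
      calc wv i + (c + (H.P ⟨k.1+1,hk⟩).v r' + ∑ j ∈ Finset.univ.erase i, wa j)
          ≤ wv i + (c + (H.P k).v r + ∑ j ∈ Finset.univ.erase i, wv j) := by
            gcongr <;> first
              | exact hv
              | exact hwa1 _
        _ = (H.P k).v r + (∑ j, wv j) + c := by rw [sum_split_at i wv]; ring
  · refine ⟨0, by rw [absCtx_eq_botctx H k hk]; rfl, ?_⟩
    rw [add_zero]
    calc wv i ≤ ∑ j, wv j := Finset.single_le_sum (fun _ _ => zero_le) (Finset.mem_univ i)
      _ ≤ (H.P k).v r + (∑ j, wv j) + c := by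
          rw [add_comm ((H.P k).v r)]
          exact le_add_right (le_add_right le_rfl)

section Frontier

variable (S : GStmt H → Option ℝ≥0∞) (Q : Set (GStmt H × ℝ≥0∞ × ℝ≥0∞)) (q : ℝ≥0∞)

def C2prop : Prop := ∀ (r : HRule H) (w : Fin (H.toPLDP.n r) → ℝ≥0∞),
  (∀ i, S (H.toPLDP.ant r i) = some (w i)) →
  S (H.toPLDP.concl r) ≠ none ∨ (H.toPLDP.concl r, H.toPLDP.g r w, H.toPLDP.pr r w) ∈ Q

def C9prop : Prop := ∀ Φ wc, S Φ = some wc → ∀ w, H.DerG Φ w → wc ≤ w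

def FrontSt (k : Fin m) : Prop := ∀ (C : (H.P k).Stmt) (w : ℝ≥0∞),
  (H.P k).Derives C w → ∀ c, H.DerG (H.absCtx k C) c →
  (∃ s', S (.stmt k C) = some s' ∧ s' ≤ w) ∨ q ≤ w + c

def FrontCtx (k : Fin m) : Prop := ∀ (C : (H.P k).Stmt) (u : ℝ≥0∞),
  (H.P k).CtxDerives (H.goal k) C u → ∀ wC, (H.P k).Derives C wC →
  (∃ u', S (.ctx k C) = some u' ∧ u' ≤ u) ∨ q ≤ u + wC

variable {H S Q q}

lemma frontier (hc2 : H.C2prop S Q) (hc9 : H.C9prop S)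
    (hmin : ∀ x ∈ Q, q ≤ x.2.2) :
    ∀ (j : ℕ) (k : Fin m), m - k.1 ≤ j → FrontSt H S q k ∧ FrontCtx H S q k := by
  intro j
  induction j with
  | zero => exact fun k hk => absurd hk (by have := k.isLt; omega)
  | succ j ih =>
    intro k hk
    have hstmt : FrontSt H S q k := by
      intro C w D
      induction D with
      | step r wv hd ihd =>
        intro c hc
        by_cases hSc : ∃ s', S (.stmt k ((H.P k).concl r)) = some s'
        · obtain ⟨s', hs'⟩ := hSc
          exact Or.inl ⟨s', hs', hc9 _ _ hs' _ (ALDP.Derives.step r wv hd)⟩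
        · -- conclusion unexpanded
          obtain hbud := H.budget_lemma k r hc wv hd
          by_cases hall : ∀ i, ∃ si, S (.stmt k ((H.P k).ant r i)) = some si ∧ si ≤ wv i
          · choose sv hsv1 hsv2 using hall
            by_cases hab : ∃ u0, S (H.absCtx k ((H.P k).concl r)) = some u0
            · -- all antecedents of the UP instance are expanded
              obtain ⟨u0, hu0⟩ := hab
              have hants : ∀ x : Fin ((H.P k).n r + 1),
                  S (H.toPLDP.ant (.up k r) x) = some (Fin.cases u0 sv x) := by
                intro x
                induction x using Fin.cases with
                | zero => simpa using hu0
                | succ x => simpa using hsv1 x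
              rcases hc2 (.up k r)
                  (Fin.cases (motive := fun _ : Fin ((H.P k).n r + 1) => ℝ≥0∞) u0 sv)
                  hants with hl | hitem
              · exact absurd (Option.eq_none_of_not_exists hSc) hl
              · refine Or.inr ?_
                have hqle : q ≤ (H.P k).v r + (∑ i, sv i) + u0 := by
                  simpa using hmin _ hitem
                calc q ≤ (H.P k).v r + (∑ i, sv i) + u0 := hqle
                  _ ≤ (H.P k).v r + (∑ i, wv i) + c := by
                      gcongr <;> first
                        | exact hsv2 _
                        | exact hc9 _ _ hu0 _ hc
            · -- context antecedent not yet expanded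
              by_cases hkk : k.1 + 1 < m
              · have hfc : FrontCtx H S q ⟨k.1+1, hkk⟩ :=
                  (ih ⟨k.1+1, hkk⟩ (by simp only; omega)).2
                obtain ⟨w', hw'le, hw'⟩ := H.absDerives k hkk (ALDP.Derives.step r wv hd)
                have hc' : (H.P ⟨k.1+1,hkk⟩).CtxDerives (H.goal ⟨k.1+1,hkk⟩)
                    (H.abs k hkk ((H.P k).concl r)) c := by
                  rw [absCtx_eq_ctx H k hkk] at hc; exact hc
                rcases hfc _ c hc' w' hw' with ⟨u0, hu0, _⟩ | hq2
                · refine absurd ⟨u0, ?_⟩ hab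
                  rw [absCtx_eq_ctx H k hkk]; exact hu0
                · exact Or.inr (by calc q ≤ c + w' := hq2
                    _ ≤ c + ((H.P k).v r + ∑ i, wv i) := by gcongr
                    _ = (H.P k).v r + (∑ i, wv i) + c := add_comm _ _)
              · -- botctx: use START2
                rcases hc2 .start2 (fun x => Fin.elim0 x) (fun x => Fin.elim0 x) with hl | hitem
                · refine absurd ?_ hab
                  rw [absCtx_eq_botctx H k hkk]
                  rcases hx : S (.botctx) with _ | v
                  · exact absurd hx hl
                  · exact ⟨v, rfl⟩
                · have hq0 : q ≤ (0 : ℝ≥0∞) := hmin _ hitem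
                  exact Or.inr (le_trans hq0 zero_le)
          · push_neg at hall
            obtain ⟨i, hi⟩ := hall
            obtain ⟨ci, hci, hcib⟩ := hbud i
            rcases ihd i ci hci with ⟨si, hsi1, hsi2⟩ | hqi
            · exact absurd hsi2 (show wv i < si from hi si hsi1).not_ge
            · exact Or.inr (le_trans hqi hcib)
    have hctx : FrontCtx H S q k := by
      intro C u K
      induction K with
      | base =>
        intro wC DC
        by_cases h : ∃ u', S (.ctx k (H.goal k)) = some u'
        · obtain ⟨u', hu'⟩ := h
          exact Or.inl ⟨u', hu', hc9 _ _ hu' _ ALDP.CtxDerives.base⟩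
        · rcases hstmt (H.goal k) wC DC 0 (H.derG_absCtx_goal_zero k) with ⟨s, hs, hsw⟩ | hq
          · rcases hc2 (.base k) (fun _ => s) (fun _ => hs) with hl | hitem
            · exact absurd (Option.eq_none_of_not_exists h) hl
            · refine Or.inr ?_
              have hqle : q ≤ s := hmin _ hitem
              calc q ≤ s := hqle
                _ ≤ wC := hsw
                _ ≤ 0 + wC := by rw [zero_add]
          · exact Or.inr (by rwa [add_zero, ← zero_add wC] at hq)
      | step r i u wv hc hd ihK =>
        intro wC DC
        by_cases hS : ∃ u', S (.ctx k ((H.P k).ant r i)) = some u'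
        · obtain ⟨u', hu'⟩ := hS
          exact Or.inl ⟨u', hu', hc9 _ _ hu' _ (ALDP.CtxDerives.step r i u wv hc hd)⟩
        · have hdw : ∀ j, (H.P k).Derives ((H.P k).ant r j) (Function.update wv i wC j) := by
            intro j
            rcases eq_or_ne j i with hj | hj
            · subst hj; rw [Function.update_self]; exact DC
            · rw [Function.update_of_ne hj]; exact hd j hj
          have hsumw : (∑ j, Function.update wv i wC j)
              = wC + ∑ j ∈ Finset.univ.erase i, wv j := by
            rw [sum_split_at i, Function.update_self]
            congr 1
            exact Finset.sum_congr rfl fun j hj =>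
              Function.update_of_ne (Finset.ne_of_mem_erase hj) _ _
          have DCpar := ALDP.Derives.step r _ hdw
          rcases ihK ((H.P k).v r + ∑ j, Function.update wv i wC j) DCpar with
            ⟨u', hu', hu'le⟩ | hq
          · obtain ⟨ua, huau, hua⟩ := H.derG_absCtx_of_ctx k hc
            obtain hbud := H.budget_lemma k r hua _ hdw
            by_cases hall : ∀ j, ∃ sj,
                S (.stmt k ((H.P k).ant r j)) = some sj ∧ sj ≤ Function.update wv i wC j
            · choose sv hsv1 hsv2 using hall
              have hants : ∀ x : Fin ((H.P k).n r + 1),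
                  S (H.toPLDP.ant (.down k r i) x) = some (Fin.cases u' sv x) := by
                intro x
                induction x using Fin.cases with
                | zero => simpa using hu'
                | succ x => simpa using hsv1 x
              rcases hc2 (.down k r i)
                  (Fin.cases (motive := fun _ : Fin ((H.P k).n r + 1) => ℝ≥0∞) u' sv)
                  hants with hl | hitem
              · exact absurd (Option.eq_none_of_not_exists hS) hl
              · refine Or.inr ?_
                have hqle : q ≤ (H.P k).v r + u' + ∑ j, sv j := by
                  simpa using hmin _ hitem
                calc q ≤ (H.P k).v r + u' + ∑ j, sv j := hqle
                  _ ≤ (H.P k).v r + u + ∑ j, Function.update wv i wC j := by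
                      gcongr <;> first
                        | exact hu'le
                        | exact hsv2 _
                  _ = u + (H.P k).v r + (∑ j ∈ Finset.univ.erase i, wv j) + wC := by
                      rw [hsumw]; ring
            · push_neg at hall
              obtain ⟨j, hj⟩ := hall
              obtain ⟨cj, hcj, hcjb⟩ := hbud j
              rcases hstmt _ _ (hdw j) cj hcj with ⟨sj, hsj1, hsj2⟩ | hqj
              · exact absurd hsj2 (show Function.update wv i wC j < sj from hj sj hsj1).not_ge
              · refine Or.inr ?_
                calc q ≤ Function.update wv i wC j + cj := hqj
                  _ ≤ (H.P k).v r + (∑ l, Function.update wv i wC l) + ua := hcjb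
                  _ ≤ (H.P k).v r + (∑ l, Function.update wv i wC l) + u := by gcongr
                  _ = u + (H.P k).v r + (∑ l ∈ Finset.univ.erase i, wv l) + wC := by
                      rw [hsumw]; ring
          · refine Or.inr ?_
            calc q ≤ u + ((H.P k).v r + ∑ j, Function.update wv i wC j) := hq
              _ = u + (H.P k).v r + (∑ j ∈ Finset.univ.erase i, wv j) + wC := by
                  rw [hsumw]; ring
    exact ⟨hstmt, hctx⟩

end Frontier

end Hier
namespace Hier

variable {m : ℕ} (H : Hier m) (hm : 0 < m)

lemma pG_botctx_eq : H.pG (.botctx) = 0 := by simp [pG, ellG, hG]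

/-- The execution invariant. -/
structure InvS (s : PLDP.State H.toPLDP) : Prop where
  c1 : ∀ x ∈ s.2, ∃ (r : HRule H) (w : Fin (H.toPLDP.n r) → ℝ≥0∞),
        (∀ i, s.1 (H.toPLDP.ant r i) = some (w i)) ∧
        x = (H.toPLDP.concl r, H.toPLDP.g r w, H.toPLDP.pr r w)
  c2 : H.C2prop s.1 s.2
  c4 : ∀ Φ w, s.1 Φ = some w → H.DerG Φ w
  c9 : s.1 (.stmt ⟨0,hm⟩ (H.goal ⟨0,hm⟩)) = none → H.C9prop s.1
  c10 : s.1 (.stmt ⟨0,hm⟩ (H.goal ⟨0,hm⟩)) = none →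
        ∀ Φ w, s.1 Φ = some w → H.pG Φ ≤ (H.P ⟨0,hm⟩).ell (H.goal ⟨0,hm⟩)

variable {H hm}

lemma cancel_right {a b c : ℝ≥0∞} (h : a + c ≤ b + c) (hc : c ≠ ⊤) : a ≤ b :=
  (ENNReal.add_le_add_iff_right hc).1 h

theorem master (hL : (H.P ⟨0,hm⟩).ell (H.goal ⟨0,hm⟩) ≠ ⊤) :
    ∀ s, (H.toPLDP).Reaches s → InvS H hm s := by
  intro s hreach
  induction hreach with
  | init =>
    constructor
    · rintro x ⟨r, h0, w, rfl⟩
      exact ⟨r, w, fun i => ((Nat.not_lt_zero i.1) (by rw [← h0]; exact i.isLt)).elim, rfl⟩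
    · intro r w hw
      by_cases h0 : H.toPLDP.n r = 0
      · exact Or.inr ⟨r, h0, w, rfl⟩
      · exact absurd (hw ⟨0, Nat.pos_of_ne_zero h0⟩) (by simp [PLDP.init])
    · intro Φ w h; exact absurd h (by simp [PLDP.init])
    · intro _ Φ w h; exact absurd h (by simp [PLDP.init])
    · intro _ Φ w h; exact absurd h (by simp [PLDP.init])
  | step s s' hr hs ih =>
    cases hs with
    | skip S Q B wB q hmem hmin hold =>
      constructor
      · exact fun x hx => ih.c1 x hx.1
      · intro r w hw
        rcases ih.c2 r w hw with hl | hitem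
        · exact Or.inl hl
        · by_cases hxx : ((H.toPLDP.concl r, H.toPLDP.g r w, H.toPLDP.pr r w) :
              GStmt H × ℝ≥0∞ × ℝ≥0∞) = (B, wB, q)
          · refine Or.inl ?_
            have hcB : H.toPLDP.concl r = B := congrArg Prod.fst hxx
            rw [hcB]; exact hold
          · exact Or.inr ⟨hitem, hxx⟩
      · exact ih.c4
      · exact ih.c9
      · exact ih.c10
    | expand S Q B wB q hmem hmin hnew =>
      have hupd_B : Function.update S B (some wB) B = some wB := Function.update_self _ _ _
      have hSs : ∀ Φ v, S Φ = some v → Function.update S B (some wB) Φ = some v := by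
        intro Φ v h
        rcases eq_or_ne Φ B with rfl | hne
        · rw [hnew] at h; cases h
        · rw [Function.update_of_ne hne]; exact h
      obtain ⟨r₀, u, hu, hx⟩ := ih.c1 _ hmem
      have hB : B = H.toPLDP.concl r₀ := congrArg Prod.fst hx
      have hwB : wB = H.toPLDP.g r₀ u := congrArg (fun y => y.2.1) hx
      have hq : q = H.toPLDP.pr r₀ u := congrArg (fun y => y.2.2) hx
      have hDB : H.DerG B wB := by
        rw [hB, hwB]; exact H.sound_step r₀ u (fun i => ih.c4 _ _ (hu i))
      have hAfact : Function.update S B (some wB) (.stmt ⟨0,hm⟩ (H.goal ⟨0,hm⟩)) = none →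
          S (.stmt ⟨0,hm⟩ (H.goal ⟨0,hm⟩)) = none := by
        intro hA'
        rcases eq_or_ne (GStmt.stmt ⟨0,hm⟩ (H.goal ⟨0,hm⟩) : GStmt H) B with h | h
        · rw [h, hupd_B] at hA'; cases hA'
        · exact (Function.update_of_ne h (some wB) S).symm.trans hA'
      -- priority bound and stored-optimality, under activity
      have hmain : S (.stmt ⟨0,hm⟩ (H.goal ⟨0,hm⟩)) = none →
          q ≤ (H.P ⟨0,hm⟩).ell (H.goal ⟨0,hm⟩) ∧ (∀ w, H.DerG B w → wB ≤ w) := by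
        intro hA
        have hc9old := ih.c9 hA
        have hfront := frontier ih.c2 hc9old hmin
        have hqL : q ≤ (H.P ⟨0,hm⟩).ell (H.goal ⟨0,hm⟩) := by
          refine le_sInf fun wg hwg => ?_
          rcases (hfront m ⟨0,hm⟩ (by omega)).1 (H.goal ⟨0,hm⟩) wg hwg 0
              (H.derG_absCtx_goal_zero ⟨0,hm⟩) with ⟨s', hs', -⟩ | hqw
          · have hs2 : S (.stmt ⟨0,hm⟩ (H.goal ⟨0,hm⟩)) = some s' := hs'
            rw [hA] at hs2; cases hs2
          · simpa using hqw
        refine ⟨hqL, ?_⟩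
        have hqtop : q ≠ ⊤ := by
          intro h; rw [h] at hqL; exact hL (top_le_iff.1 hqL)
        intro w hDw
        cases r₀ with
        | start1 =>
          have h0 : wB = 0 := hwB
          rw [h0]; exact zero_le
        | start2 =>
          have h0 : wB = 0 := hwB
          rw [h0]; exact zero_le
        | base k =>
          have h0 : wB = 0 := hwB
          rw [h0]; exact zero_le
        | up k r =>
          have hu0 := hu (0 : Fin ((H.P k).n r + 1))
          rw [tp_ant_up_zero] at hu0
          have hDu0 := ih.c4 _ _ hu0
          have hnone : S (.stmt k ((H.P k).concl r)) = none := by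
            rw [← tp_concl_up, ← hB]; exact hnew
          have hD : (H.P k).Derives ((H.P k).concl r) w := by rw [hB] at hDw; exact hDw
          rcases (hfront m k (by omega)).1 _ w hD _ hDu0 with ⟨s', hs', -⟩ | hqw
          · have hs2 : S (.stmt k ((H.P k).concl r)) = some s' := hs'
            rw [hnone] at hs2; cases hs2
          · have hqeq : q = wB + u (0 : Fin ((H.P k).n r + 1)) := by rw [hq, hwB]; rfl
            have hutop : u (0 : Fin ((H.P k).n r + 1)) ≠ ⊤ := by
              intro h; exact hqtop (by rw [hqeq, h, add_top])
            refine cancel_right ?_ hutop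
            rw [← hqeq]; exact hqw
        | down k r i =>
          have hui := hu i.succ
          rw [tp_ant_down_succ] at hui
          have hDui := ih.c4 _ _ hui
          have hnone : S (.ctx k ((H.P k).ant r i)) = none := by
            rw [← tp_concl_down, ← hB]; exact hnew
          have hD : (H.P k).CtxDerives (H.goal k) ((H.P k).ant r i) w := by
            rw [hB] at hDw; exact hDw
          rcases (hfront m k (by omega)).2 _ w hD _ hDui with ⟨s', hs', -⟩ | hqw
          · have hs2 : S (.ctx k ((H.P k).ant r i)) = some s' := hs'
            rw [hnone] at hs2; cases hs2
          · have hqeq : q = wB + u i.succ := by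
              rw [hq, hwB]
              change (H.P k).v r + u (0 : Fin ((H.P k).n r + 1)) + ∑ j : Fin ((H.P k).n r), u j.succ = ((H.P k).v r + u (0 : Fin ((H.P k).n r + 1)) + ∑ j ∈ Finset.univ.erase i, u j.succ) + u i.succ
              rw [sum_split_at i (fun j => u j.succ)]
              ring
            have hutop : u i.succ ≠ ⊤ := by
              intro h; exact hqtop (by rw [hqeq, h, add_top])
            refine cancel_right ?_ hutop
            rw [← hqeq]; exact hqw
      have hpGq : H.pG B ≤ q := by
        cases r₀ with
        | start1 =>
          rw [hB]
          exact le_trans (le_of_eq H.pG_bot_eq) zero_le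
        | start2 =>
          rw [hB]
          exact le_trans (le_of_eq H.pG_botctx_eq) zero_le
        | base k =>
          rw [hB]
          have h1 : H.ellG (.ctx k (H.goal k)) ≤ 0 := sInf_le ALDP.CtxDerives.base
          have h2 : H.hG (.ctx k (H.goal k)) ≤ u (0 : Fin 1) :=
            sInf_le (ih.c4 _ _ (hu (0 : Fin 1)))
          calc H.pG (.ctx k (H.goal k)) ≤ 0 + u (0 : Fin 1) := add_le_add h1 h2
            _ = q := by rw [hq, zero_add]; rfl
        | up k r =>
          rw [hB]
          have hDB' : H.DerG (.stmt k ((H.P k).concl r)) wB := by rw [← tp_concl_up, ← hB]; exact hDB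
          have h1 : H.ellG (.stmt k ((H.P k).concl r)) ≤ wB := H.ellG_le_of_derG hDB'
          have hu0 := hu (0 : Fin ((H.P k).n r + 1))
          rw [tp_ant_up_zero] at hu0
          have h2 : H.hG (.stmt k ((H.P k).concl r)) ≤ u (0 : Fin ((H.P k).n r + 1)) :=
            H.ellG_le_of_derG (ih.c4 _ _ hu0)
          calc H.pG (.stmt k ((H.P k).concl r))
              ≤ wB + u (0 : Fin ((H.P k).n r + 1)) := add_le_add h1 h2
            _ = q := by rw [hq, hwB]; rfl
        | down k r i =>
          rw [hB]
          have hDB' : H.DerG (.ctx k ((H.P k).ant r i)) wB := by rw [← tp_concl_down, ← hB]; exact hDB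
          have h1 : H.ellG (.ctx k ((H.P k).ant r i)) ≤ wB := H.ellG_le_of_derG hDB'
          have hui := hu i.succ
          rw [tp_ant_down_succ] at hui
          have h2 : H.hG (.ctx k ((H.P k).ant r i)) ≤ u i.succ :=
            sInf_le (ih.c4 _ _ hui)
          calc H.pG (.ctx k ((H.P k).ant r i)) ≤ wB + u i.succ := add_le_add h1 h2
            _ = q := by
              rw [hq, hwB]
              change ((H.P k).v r + u (0 : Fin ((H.P k).n r + 1)) + ∑ j ∈ Finset.univ.erase i, u j.succ) + u i.succ = (H.P k).v r + u (0 : Fin ((H.P k).n r + 1)) + ∑ j : Fin ((H.P k).n r), u j.succ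
              rw [sum_split_at i (fun j => u j.succ)]
              ring
      constructor
      · dsimp only
        rintro x (⟨hxQ, -⟩ | ⟨r, w, hw, -, rfl⟩)
        · obtain ⟨r, w, hw, rfl⟩ := ih.c1 x hxQ
          exact ⟨r, w, fun i => hSs _ _ (hw i), rfl⟩
        · exact ⟨r, w, hw, rfl⟩
      · dsimp only [PLDP.State] at *
        intro r w hw
        by_cases hBant : ∃ i, H.toPLDP.ant r i = B
        · exact Or.inr (Set.mem_union_right _ ⟨r, w, hw, hBant, rfl⟩)
        · have hw' : ∀ i, S (H.toPLDP.ant r i) = some (w i) := by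
            intro i
            have hne : H.toPLDP.ant r i ≠ B := fun h => hBant ⟨i, h⟩
            rw [← Function.update_of_ne hne (some wB) S]; exact hw i
          rcases ih.c2 r w hw' with hl | hitem
          · refine Or.inl ?_
            rcases eq_or_ne (H.toPLDP.concl r) B with hcb | hcb
            · rw [hcb, hupd_B]; simp
            · rw [Function.update_of_ne hcb]; exact hl
          · by_cases hxx : ((H.toPLDP.concl r, H.toPLDP.g r w, H.toPLDP.pr r w) :
                GStmt H × ℝ≥0∞ × ℝ≥0∞) = (B, wB, q)
            · refine Or.inl ?_
              have hcB : H.toPLDP.concl r = B := congrArg Prod.fst hxx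
              rw [hcB, hupd_B]; simp
            · exact Or.inr (Set.mem_union_left _ ⟨hitem, hxx⟩)
      · dsimp only
        intro Φ w h
        rcases eq_or_ne Φ B with rfl | hne
        · rw [hupd_B] at h
          obtain rfl : wB = w := Option.some.inj h
          exact hDB
        · rw [Function.update_of_ne hne] at h; exact ih.c4 _ _ h
      · -- c9
        dsimp only
        intro hA'
        have hA := hAfact hA'
        obtain ⟨-, hopt⟩ := hmain hA
        intro Φ wc hst w hDw
        rcases eq_or_ne Φ B with rfl | hne
        · rw [hupd_B] at hst
          obtain rfl : wB = wc := Option.some.inj hst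
          exact hopt w hDw
        · exact ih.c9 hA _ _ ((Function.update_of_ne hne (some wB) S).symm.trans hst) w hDw
      · -- c10
        dsimp only
        intro hA'
        have hA := hAfact hA'
        obtain ⟨hqL, -⟩ := hmain hA
        intro Φ wc hst
        rcases eq_or_ne Φ B with rfl | hne
        · exact le_trans hpGq hqL
        · exact ih.c10 hA _ _ ((Function.update_of_ne hne (some wB) S).symm.trans hst)

end Hier
/-- Fold contexts onto their statements (2-to-1 map onto statements). -/
def GStmt.toStmtPart {m : ℕ} {H : Hier m} : GStmt H → GStmt H
  | .ctx k C => .stmt k C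
  | .botctx => .bot
  | x => x
/-- HA*LD expands at most `2K` generalized statements before
computing a lightest derivation of `goal`, where `K` is the number of
statements `C` in the abstraction hierarchy with `p(C) ≤ ℓ(goal)`: at any
reachable state of the execution in which `goal` has not yet been expanded,
the number of expanded generalized statements is at most `2K`. -/
theorem hald_expands_at_most_2K (m : ℕ) (hm : 0 < m) (H : Hier m)
    (hK : {Φ : GStmt H | Φ.IsStmt ∧
      H.pG Φ ≤ (H.P ⟨0, hm⟩).ell (H.goal ⟨0, hm⟩)}.Finite) :
    ∀ s : (H.toPLDP).State, (H.toPLDP).Reaches s →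
      s.1 (.stmt ⟨0, hm⟩ (H.goal ⟨0, hm⟩)) = none →
      {Φ : GStmt H | s.1 Φ ≠ none}.ncard ≤
        2 * {Φ : GStmt H | Φ.IsStmt ∧
          H.pG Φ ≤ (H.P ⟨0, hm⟩).ell (H.goal ⟨0, hm⟩)}.ncard := by
  classical
  intro s hreach hnone
  have hE : ∀ Φ : GStmt H, s.1 Φ ≠ none →
      H.pG Φ ≤ (H.P ⟨0, hm⟩).ell (H.goal ⟨0, hm⟩) := by
    by_cases hL : (H.P ⟨0, hm⟩).ell (H.goal ⟨0, hm⟩) = ⊤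
    · intro Φ _; rw [hL]; exact le_top
    · intro Φ hΦ
      obtain ⟨w, hw⟩ : ∃ w, s.1 Φ = some w := by
        rcases hx : s.1 Φ with _ | w
        · exact absurd hx hΦ
        · exact ⟨w, rfl⟩
      exact (Hier.master hL s hreach).c10 hnone Φ w hw
  have hE1sub : {Φ : GStmt H | s.1 Φ ≠ none} ∩ {Φ : GStmt H | Φ.IsStmt} ⊆
      {Φ : GStmt H | Φ.IsStmt ∧ H.pG Φ ≤ (H.P ⟨0, hm⟩).ell (H.goal ⟨0, hm⟩)} :=
    fun Φ hΦ => ⟨hΦ.2, hE Φ hΦ.1⟩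
  have hE2img : GStmt.toStmtPart ''
        ({Φ : GStmt H | s.1 Φ ≠ none} \ {Φ : GStmt H | Φ.IsStmt}) ⊆
      {Φ : GStmt H | Φ.IsStmt ∧ H.pG Φ ≤ (H.P ⟨0, hm⟩).ell (H.goal ⟨0, hm⟩)} := by
    rintro _ ⟨Φ, hΦ, rfl⟩
    have hns : ¬ Φ.IsStmt := hΦ.2
    have hpG := hE Φ hΦ.1
    cases Φ with
    | stmt k C => exact absurd trivial hns
    | bot => exact absurd trivial hns
    | ctx k C => exact ⟨trivial, le_trans (H.pG_stmt_le_pG_ctx k C) hpG⟩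
    | botctx => exact ⟨trivial, le_trans (le_of_eq H.pG_bot_eq) zero_le⟩
  have hinj : Set.InjOn GStmt.toStmtPart
      ({Φ : GStmt H | s.1 Φ ≠ none} \ {Φ : GStmt H | Φ.IsStmt}) := by
    intro a ha b hb hab
    have hna : ¬ a.IsStmt := ha.2
    have hnb : ¬ b.IsStmt := hb.2
    cases a with
    | stmt k C => exact absurd trivial hna
    | bot => exact absurd trivial hna
    | ctx k C =>
      cases b with
      | stmt k' C' => exact absurd trivial hnb
      | bot => exact absurd trivial hnb
      | ctx k' C' =>
        have hab' : (GStmt.stmt k C : GStmt H) = .stmt k' C' := hab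
        injection hab' with h1 h2
        subst h1
        rw [eq_of_heq h2]
      | botctx => cases (show (GStmt.stmt k C : GStmt H) = .bot from hab)
    | botctx =>
      cases b with
      | stmt k' C' => exact absurd trivial hnb
      | bot => exact absurd trivial hnb
      | ctx k' C' => cases (show (GStmt.bot : GStmt H) = .stmt k' C' from hab)
      | botctx => rfl
  have hfE1 : ({Φ : GStmt H | s.1 Φ ≠ none} ∩ {Φ : GStmt H | Φ.IsStmt}).Finite :=
    hK.subset hE1sub
  have hfE2 : ({Φ : GStmt H | s.1 Φ ≠ none} \ {Φ : GStmt H | Φ.IsStmt}).Finite :=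
    Set.Finite.of_finite_image (hK.subset hE2img) hinj
  have hsplit : {Φ : GStmt H | s.1 Φ ≠ none} =
      ({Φ : GStmt H | s.1 Φ ≠ none} ∩ {Φ : GStmt H | Φ.IsStmt}) ∪
      ({Φ : GStmt H | s.1 Φ ≠ none} \ {Φ : GStmt H | Φ.IsStmt}) :=
    (Set.inter_union_diff _ _).symm
  have h1 : ({Φ : GStmt H | s.1 Φ ≠ none} ∩ {Φ : GStmt H | Φ.IsStmt}).ncard ≤
      {Φ : GStmt H | Φ.IsStmt ∧ H.pG Φ ≤ (H.P ⟨0, hm⟩).ell (H.goal ⟨0, hm⟩)}.ncard :=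
    Set.ncard_le_ncard hE1sub hK
  have h2 : ({Φ : GStmt H | s.1 Φ ≠ none} \ {Φ : GStmt H | Φ.IsStmt}).ncard ≤
      {Φ : GStmt H | Φ.IsStmt ∧ H.pG Φ ≤ (H.P ⟨0, hm⟩).ell (H.goal ⟨0, hm⟩)}.ncard := by
    rw [← Set.ncard_image_of_injOn hinj]
    exact Set.ncard_le_ncard hE2img hK
  calc {Φ : GStmt H | s.1 Φ ≠ none}.ncard
      = (({Φ : GStmt H | s.1 Φ ≠ none} ∩ {Φ : GStmt H | Φ.IsStmt}) ∪
        ({Φ : GStmt H | s.1 Φ ≠ none} \ {Φ : GStmt H | Φ.IsStmt})).ncard := by rw [← hsplit]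
    _ ≤ _ + _ := Set.ncard_union_le _ _
    _ ≤ 2 * {Φ : GStmt H | Φ.IsStmt ∧
          H.pG Φ ≤ (H.P ⟨0, hm⟩).ell (H.goal ⟨0, hm⟩)}.ncard := by omega
end
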